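/- Let $A$ and $B$ be $n \times n$ complex matrices. Then $|\det(A) - \det(B)| \leq n \cdot \|A - B\|_{\max} \cdot \max(\|A\|_{\max}, \|B\|_{\max})^{n-1} \cdot n^{n/2}$, where $\|M\|_{\max} := \max_{i,j} |M_{ij}|$. -/

import Mathlib

open Finset

lemma euclid_sum_apply {n : ℕ} {ι : Type*} (s : Finset ι) (f : ι → EuclideanSpace ℂ (Fin n))
    (k : Fin n) : (∑ j ∈ s, f j) k = ∑ j ∈ s, f j k := by
  induction s using Finset.cons_induction with
  | empty => rfl
  | cons a s ha ih => rw [Finset.sum_cons, Finset.sum_cons, ← ih]; rfl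

/-- Hadamard's inequality: `|det C|` is at most the product of the ℓ² norms of the rows. -/
lemma abs_det_le_prod_norm_row {n : ℕ} (C : Matrix (Fin n) (Fin n) ℂ) :
    ‖C.det‖ ≤ ∏ i, ‖(WithLp.equiv 2 (Fin n → ℂ)).symm (C i)‖ := by
  classical
  have iwf : WellFoundedLT (Fin n) := @IsWellOrder.toIsWellFounded _ _ _
  set v : Fin n → EuclideanSpace ℂ (Fin n) := fun i => (WithLp.equiv 2 (Fin n → ℂ)).symm (C i) with hv
  set u : Fin n → EuclideanSpace ℂ (Fin n) := @InnerProductSpace.gramSchmidt ℂ _ _ _ _ (Fin n) _ _ iwf v with hu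
  have horth : ∀ a b : Fin n, a ≠ b → (inner ℂ (u a) (u b) : ℂ) = 0 := fun a b h =>
    @InnerProductSpace.gramSchmidt_orthogonal ℂ _ _ _ _ (Fin n) _ _ iwf v a b h
  have hdef : ∀ i, v i = u i +
      ∑ j ∈ Iio i, ((inner ℂ (u j) (v i) : ℂ) / (‖u j‖ : ℂ) ^ 2) • u j := fun i =>
    @InnerProductSpace.gramSchmidt_def'' ℂ _ _ _ _ (Fin n) _ _ iwf v i
  set c : Fin n → Fin n → ℂ := fun i j => (inner ℂ (u j) (v i) : ℂ) / (‖u j‖ : ℂ) ^ 2 with hc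
  set U : Matrix (Fin n) (Fin n) ℂ := Matrix.of (fun i j => u i j) with hU
  set L : Matrix (Fin n) (Fin n) ℂ := Matrix.of (fun i j =>
      if j < i then c i j else if j = i then 1 else 0) with hL
  have hCLU : C = L * U := by
    ext i k
    rw [Matrix.mul_apply]
    have hz : ∀ j ∈ Finset.univ, j ∉ insert i (Iio i) → L i j * U j k = 0 := by
      intro j _ hj
      simp only [Finset.mem_insert, Finset.mem_Iio, not_or] at hj
      simp [hL, hj.2, hj.1]
    rw [← Finset.sum_subset (Finset.subset_univ _) hz, Finset.sum_insert (by simp)]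
    have h1 : L i i = 1 := by simp [hL]
    have h2 : ∀ j ∈ Iio i, L i j * U j k = c i j * u j k := by
      intro j hj
      simp [hL, Finset.mem_Iio.mp hj]
      exact Or.inl rfl
    rw [h1, one_mul, Finset.sum_congr rfl h2]
    have h3 : C i k = (v i) k := rfl
    rw [h3, hdef i]
    have h4 : (u i + ∑ j ∈ Iio i, c i j • u j) k = u i k + ∑ j ∈ Iio i, c i j * u j k := by
      have := euclid_sum_apply (Iio i) (fun j => c i j • u j) k
      simp only [PiLp.add_apply, this, PiLp.smul_apply, smul_eq_mul]
    exact h4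
  have hLtri : L.BlockTriangular OrderDual.toDual := by
    intro i j hij
    have h1 : ¬ j < i := not_lt_of_gt hij
    have h2 : j ≠ i := ne_of_gt hij
    simp [hL, h1, h2]
  have hLdet : L.det = 1 := by
    rw [Matrix.det_of_lowerTriangular L hLtri]
    simp [hL]
  have hdet : C.det = U.det := by rw [hCLU, Matrix.det_mul, hLdet, one_mul]
  have hUU : U * U.conjTranspose = Matrix.diagonal (fun i => ((‖u i‖ : ℂ)) ^ 2) := by
    ext i j
    rw [Matrix.mul_apply]
    have key : ∑ k, U i k * U.conjTranspose k j = (inner ℂ (u j) (u i) : ℂ) := by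
      rw [PiLp.inner_apply]
      simp only [Matrix.conjTranspose_apply, RCLike.inner_apply]
      exact Finset.sum_congr rfl fun k _ => by simp [hU, mul_comm]
    rw [key]
    by_cases h : i = j
    · subst h
      rw [inner_self_eq_norm_sq_to_K, Matrix.diagonal_apply_eq]
      rfl
    · rw [horth j i (Ne.symm h), Matrix.diagonal_apply_ne _ h]
  have hnormSq : (Complex.normSq U.det : ℂ) = ((∏ i, ‖u i‖ ^ 2 : ℝ) : ℂ) := by
    rw [← Complex.mul_conj]
    have : (starRingEnd ℂ) U.det = U.conjTranspose.det := by
      rw [Matrix.det_conjTranspose]; rfl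
    rw [this, ← Matrix.det_mul, hUU, Matrix.det_diagonal]
    push_cast
    rfl
  have hnormSq' : Complex.normSq U.det = ∏ i, ‖u i‖ ^ 2 := by exact_mod_cast hnormSq
  have habs : ‖U.det‖ = ∏ i, ‖u i‖ := by
    rw [Complex.norm_def, hnormSq', Finset.prod_pow]
    exact Real.sqrt_sq (Finset.prod_nonneg fun i _ => norm_nonneg _)
  have hle : ∀ i, ‖u i‖ ≤ ‖v i‖ := by
    intro i
    set w : EuclideanSpace ℂ (Fin n) := ∑ j ∈ Iio i, c i j • u j with hw
    have hvw : v i = u i + w := hdef i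
    have hiw : (inner ℂ (u i) w : ℂ) = 0 := by
      rw [hw, inner_sum]
      refine Finset.sum_eq_zero fun j hj => ?_
      rw [inner_smul_right, horth i j (Finset.mem_Iio.mp hj).ne', mul_zero]
    have hsq : ‖v i‖ ^ 2 = ‖u i‖ ^ 2 + ‖w‖ ^ 2 := by
      rw [hvw, @norm_add_sq ℂ _ _ _ _ (u i) w, hiw]
      simp
    nlinarith [norm_nonneg (u i), norm_nonneg (v i), norm_nonneg w, sq_nonneg (‖w‖)]
  calc ‖C.det‖ = ∏ i, ‖u i‖ := by rw [hdet, habs]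
    _ ≤ ∏ i, ‖(WithLp.equiv 2 (Fin n → ℂ)).symm (C i)‖ :=
        Finset.prod_le_prod (fun i _ => norm_nonneg _) (fun i _ => hle i)

/-- The max-norm of a complex matrix: the supremum of the absolute values of its entries. -/
noncomputable def maxNorm {n : ℕ} (M : Matrix (Fin n) (Fin n) ℂ) : ℝ :=
  ⨆ i, ⨆ j, ‖M i j‖

lemma entry_le_maxNorm {n : ℕ} (M : Matrix (Fin n) (Fin n) ℂ) (i j : Fin n) :
    ‖M i j‖ ≤ maxNorm M := by
  refine le_trans (le_ciSup (f := fun j => ‖M i j‖) (Set.Finite.bddAbove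
    (Set.finite_range _)) j) ?_
  exact le_ciSup (f := fun i => ⨆ j, ‖M i j‖)
    (Set.Finite.bddAbove (Set.finite_range _)) i

lemma maxNorm_nonneg {n : ℕ} (hn : 0 < n) (M : Matrix (Fin n) (Fin n) ℂ) : 0 ≤ maxNorm M :=
  le_trans (norm_nonneg _) (entry_le_maxNorm M ⟨0, hn⟩ ⟨0, hn⟩)

lemma row_norm_le {n : ℕ} (x : EuclideanSpace ℂ (Fin n)) (b : ℝ) (hb : 0 ≤ b)
    (h : ∀ j, ‖x j‖ ≤ b) : ‖x‖ ≤ Real.sqrt n * b := by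
  rw [EuclideanSpace.norm_eq]
  have h1 : ∑ j, ‖x j‖ ^ 2 ≤ (n : ℝ) * b ^ 2 := by
    calc ∑ j, ‖x j‖ ^ 2 ≤ ∑ _j : Fin n, b ^ 2 :=
          Finset.sum_le_sum fun j _ => by
            have := h j
            exact pow_le_pow_left₀ (norm_nonneg _) this 2
      _ = (n : ℝ) * b ^ 2 := by simp [mul_comm]
  calc Real.sqrt (∑ j, ‖x j‖ ^ 2) ≤ Real.sqrt ((n : ℝ) * b ^ 2) := Real.sqrt_le_sqrt h1
    _ = Real.sqrt n * b := by
        rw [Real.sqrt_mul (by positivity), Real.sqrt_sq hb]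

/-- `|det A - det B| ≤ n ‖A-B‖_max max(‖A‖_max,‖B‖_max)^{n-1} n^{n/2}`. -/
theorem stmt0 (n : ℕ) (A B : Matrix (Fin n) (Fin n) ℂ) :
    ‖A.det - B.det‖ ≤
      (n : ℝ) * maxNorm (A - B) * max (maxNorm A) (maxNorm B) ^ (n - 1) *
        (n : ℝ) ^ ((n : ℝ) / 2) := by
  classical
  rcases Nat.eq_zero_or_pos n with hn | hn
  · subst hn
    simp [Matrix.det_isEmpty]
  set d := maxNorm (A - B) with hd'
  set m := max (maxNorm A) (maxNorm B) with hm'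
  have hd : 0 ≤ d := maxNorm_nonneg hn _
  have hm : 0 ≤ m := le_trans (maxNorm_nonneg hn A) (le_max_left _ _)
  have hAm : ∀ i j, ‖A i j‖ ≤ m := fun i j =>
    (entry_le_maxNorm A i j).trans (le_max_left _ _)
  have hBm : ∀ i j, ‖B i j‖ ≤ m := fun i j =>
    (entry_le_maxNorm B i j).trans (le_max_right _ _)
  have hABd : ∀ i j, ‖A i j - B i j‖ ≤ d := fun i j => entry_le_maxNorm (A - B) i j
  set F : ℕ → Matrix (Fin n) (Fin n) ℂ :=
    fun k => Matrix.of fun i j => if (i : ℕ) < k then A i j else B i j with hF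
  have hF0 : F 0 = B := by ext i j; simp [hF]
  have hFn : F n = A := by ext i j; simp [hF, i.isLt]
  set D : ℕ → Matrix (Fin n) (Fin n) ℂ :=
    fun k => Matrix.of fun i j =>
      if (i : ℕ) < k then A i j else if (i : ℕ) = k then A i j - B i j else B i j with hD
  have key : ∀ k, k < n → (F (k + 1)).det - (F k).det = (D k).det := by
    intro k hk
    set k' : Fin n := ⟨k, hk⟩ with hk'
    have h1 : F (k + 1) = (F k).updateRow k' (fun j => A k' j) := by
      ext i j
      by_cases hik : i = k'
      · subst hik; simp [hF, Matrix.updateRow_self, hk']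
      · rw [Matrix.updateRow_ne hik]
        have : (i : ℕ) ≠ k := fun h => hik (Fin.ext h)
        simp only [hF, Matrix.of_apply]
        exact if_congr (by omega) rfl rfl
    have h2 : F k = (F k).updateRow k' (fun j => B k' j) := by
      ext i j
      by_cases hik : i = k'
      · subst hik; simp [hF, Matrix.updateRow_self, hk']
      · rw [Matrix.updateRow_ne hik]
    have h3 : D k = (F k).updateRow k' (fun j => A k' j - B k' j) := by
      ext i j
      by_cases hik : i = k'
      · subst hik; simp [hD, hF, Matrix.updateRow_self, hk']
      · rw [Matrix.updateRow_ne hik]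
        have hne : (i : ℕ) ≠ k := fun h => hik (Fin.ext h)
        simp only [hD, hF, Matrix.of_apply, if_neg hne]
    have hadd := Matrix.det_updateRow_add (F k) k'
      (fun j => A k' j - B k' j) (fun j => B k' j)
    have hsum : (fun j => A k' j - B k' j) + (fun j => B k' j) = fun j => A k' j := by
      funext j; simp
    rw [hsum] at hadd
    have hBdet : ((F k).updateRow k' fun j => B k' j).det = (F k).det := by rw [← h2]
    rw [h1, h3, hadd, hBdet]
    ring
  have tele : A.det - B.det = ∑ k ∈ Finset.range n, (D k).det := by
    have := Finset.sum_range_sub (fun k => (F k).det) n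
    rw [hF0, hFn] at this
    rw [← this]
    exact Finset.sum_congr rfl fun k hk => key k (Finset.mem_range.mp hk)
  have hDk : ∀ k, k < n →
      ‖(D k).det‖ ≤ Real.sqrt n * d * (Real.sqrt n * m) ^ (n - 1) := by
    intro k hk
    refine le_trans (abs_det_le_prod_norm_row (D k)) ?_
    set k' : Fin n := ⟨k, hk⟩ with hk'
    have hrow : ∀ i : Fin n, ‖(WithLp.equiv 2 (Fin n → ℂ)).symm (D k i)‖ ≤
        (if i = k' then Real.sqrt n * d else Real.sqrt n * m) := by
      intro i
      by_cases hik : i = k'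
      · rw [if_pos hik]
        refine row_norm_le _ d hd fun j => ?_
        have hik' : (i : ℕ) = k := by rw [hik]
        have heq : D k i j = A i j - B i j := by simp [hD, hik']
        show ‖D k i j‖ ≤ d
        rw [heq]; exact hABd i j
      · rw [if_neg hik]
        refine row_norm_le _ m hm fun j => ?_
        have hne : (i : ℕ) ≠ k := fun h => hik (Fin.ext h)
        by_cases hlt : (i : ℕ) < k
        · have heq : D k i j = A i j := by simp [hD, hlt]
          show ‖D k i j‖ ≤ m
          rw [heq]; exact hAm i j
        · have heq : D k i j = B i j := by simp [hD, hlt, hne]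
          show ‖D k i j‖ ≤ m
          rw [heq]; exact hBm i j
    calc ∏ i, ‖(WithLp.equiv 2 (Fin n → ℂ)).symm (D k i)‖
        ≤ ∏ i, (if i = k' then Real.sqrt n * d else Real.sqrt n * m) :=
          Finset.prod_le_prod (fun i _ => norm_nonneg _) (fun i _ => hrow i)
      _ = Real.sqrt n * d * (Real.sqrt n * m) ^ (n - 1) := by
          rw [← Finset.mul_prod_erase Finset.univ _ (Finset.mem_univ k')]
          rw [if_pos rfl]
          congr 1
          rw [Finset.prod_congr rfl (fun i hi => if_neg (Finset.mem_erase.mp hi).1),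
            Finset.prod_const, Finset.card_erase_of_mem (Finset.mem_univ _), Finset.card_univ,
            Fintype.card_fin]
  have hsqrtpow : (n : ℝ) ^ ((n : ℝ) / 2) = Real.sqrt n ^ n := by
    rw [Real.sqrt_eq_rpow, ← Real.rpow_natCast ((n : ℝ) ^ ((1 : ℝ)/2)) n,
      ← Real.rpow_mul (by positivity)]
    congr 1
    ring
  calc ‖A.det - B.det‖ = ‖∑ k ∈ Finset.range n, (D k).det‖ := by
        rw [tele]
    _ ≤ ∑ k ∈ Finset.range n, ‖(D k).det‖ := by
        exact norm_sum_le _ _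
    _ ≤ ∑ k ∈ Finset.range n, Real.sqrt n * d * (Real.sqrt n * m) ^ (n - 1) :=
        Finset.sum_le_sum fun k hk => hDk k (Finset.mem_range.mp hk)
    _ = (n : ℝ) * (Real.sqrt n * d * (Real.sqrt n * m) ^ (n - 1)) := by
        rw [Finset.sum_const, Finset.card_range]; simp [nsmul_eq_mul]
    _ = (n : ℝ) * d * m ^ (n - 1) * (Real.sqrt n ^ n) := by
        rw [mul_pow]
        have hn1 : n - 1 + 1 = n := Nat.succ_pred_eq_of_pos hn
        calc (n : ℝ) * (Real.sqrt ↑n * d * (Real.sqrt ↑n ^ (n - 1) * m ^ (n - 1)))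
            = (n : ℝ) * d * m ^ (n - 1) * (Real.sqrt ↑n ^ (n - 1) * Real.sqrt ↑n) := by ring
          _ = (n : ℝ) * d * m ^ (n - 1) * (Real.sqrt ↑n ^ n) := by
              rw [← pow_succ, hn1]
    _ = (n : ℝ) * d * m ^ (n - 1) * (n : ℝ) ^ ((n : ℝ) / 2) := by rw [hsqrtpow]
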